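/- For (x₁,x₂,η) ∈ ℂ² × {η ∈ ℂ : Re η < 0}, the Pearcey integral u(x₁,x₂,η) = ∫_{−∞}^{∞} exp(η(z⁴ + x₂z² + x₁z)) dz converges absolutely, defines an analytic function of (x₁,x₂,η), and satisfies the system P₁u = 0, P₂u = 0, P₃u = 0. -/

import Mathlib

open MeasureTheory Complex Filter Set Metric Topology BoundedContinuousFunction


open MeasureTheory

/-- The Pearcey integral with large parameter `η`:
`u(x₁,x₂,η) = ∫_{-∞}^{∞} exp(η(z⁴ + x₂z² + x₁z)) dz`. -/
noncomputable def pearcey (x₁ x₂ η : ℂ) : ℂ :=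
  ∫ z : ℝ, Complex.exp (η * ((z : ℂ) ^ 4 + x₂ * (z : ℂ) ^ 2 + x₁ * (z : ℂ)))

/-- Partial derivative in the first variable `x₁`. -/
noncomputable def D1 (f : ℂ → ℂ → ℂ → ℂ) : ℂ → ℂ → ℂ → ℂ :=
  fun a b c => deriv (fun w => f w b c) a

/-- Partial derivative in the second variable `x₂`. -/
noncomputable def D2 (f : ℂ → ℂ → ℂ → ℂ) : ℂ → ℂ → ℂ → ℂ :=
  fun a b c => deriv (fun w => f a w c) b

/-- `P₁ = 4∂₁∂₂ + 2ηx₂∂₁ + η²x₁`. -/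
noncomputable def P1 (f : ℂ → ℂ → ℂ → ℂ) : ℂ → ℂ → ℂ → ℂ :=
  fun a b c => 4 * D1 (D2 f) a b c + 2 * c * b * D1 f a b c + c ^ 2 * a * f a b c

/-- `P₂ = 4∂₂² + ηx₁∂₁ + 2ηx₂∂₂ + η`. -/
noncomputable def P2 (f : ℂ → ℂ → ℂ → ℂ) : ℂ → ℂ → ℂ → ℂ :=
  fun a b c => 4 * D2 (D2 f) a b c + c * a * D1 f a b c + 2 * c * b * D2 f a b c + c * f a b c

/-- `P₃ = η∂₂ − ∂₁²`. -/
noncomputable def P3 (f : ℂ → ℂ → ℂ → ℂ) : ℂ → ℂ → ℂ → ℂ :=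
  fun a b c => c * D2 f a b c - D1 (D1 f) a b c




lemma quartic_bound (a b c : ℝ) (ha : a < 0) :
    ∃ K : ℝ, ∀ z : ℝ, a*z^4 + b*z^2 + c*|z| ≤ -z^2 + K := by
  refine ⟨(b+3/2)^2/(4*(-a)) + c^2/2, fun z => ?_⟩
  set t := |z| with htdef
  have ht : 0 ≤ t := abs_nonneg z
  have h2 : t^2 = z^2 := sq_abs z
  have h4 : t^4 = z^4 := by
    rw [show (4:ℕ) = 2*2 from rfl, pow_mul, pow_mul, h2]
  have hA : (0:ℝ) < -a := by linarith
  have hdiv : (b+3/2)^2/(4*(-a)) * (4*(-a)) = (b+3/2)^2 :=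
    div_mul_cancel₀ _ (ne_of_gt (by linarith : (0:ℝ) < 4*(-a)))
  rw [← h2, ← h4]
  nlinarith [sq_nonneg (2*(-a)*t^2 - (b+3/2)), sq_nonneg (t - c), sq_nonneg t,
    mul_pos hA hA, sq_nonneg (t*t)]

lemma quartic_bound' (a b c : ℝ) (ha : a < 0) :
    ∃ K : ℝ, ∀ z : ℝ, a*z^4 + b*z^2 + c*|z| ≤ K := by
  obtain ⟨K, hK⟩ := quartic_bound a b c ha
  exact ⟨K, fun z => by nlinarith [hK z, sq_nonneg z]⟩

lemma integR (a b c : ℝ) (ha : a < 0) :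
    Integrable (fun z : ℝ => Real.exp (a*z^4 + b*z^2 + c*|z|)) := by
  obtain ⟨K, hK⟩ := quartic_bound a b c ha
  have hg : Integrable (fun z : ℝ => Real.exp K * Real.exp (-(1:ℝ)*z^2)) :=
    (integrable_exp_neg_mul_sq one_pos).const_mul _
  refine hg.mono' ?_ ?_
  · exact (Real.continuous_exp.comp (by continuity)).aestronglyMeasurable
  · refine ae_of_all _ fun z => ?_
    rw [Real.norm_eq_abs, abs_of_pos (Real.exp_pos _), ← Real.exp_add]
    apply Real.exp_le_exp.2
    have := hK z; linarith



/-- the basic integrand -/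
noncomputable def Eker (a b c : ℂ) (z : ℝ) : ℂ :=
  Complex.exp (c * ((z : ℂ) ^ 4 + b * (z : ℂ) ^ 2 + a * (z : ℂ)))

lemma Eker_continuous (a b c : ℂ) : Continuous (Eker a b c) := by
  unfold Eker; continuity

lemma norm_Eker (a b c : ℂ) (z : ℝ) :
    ‖Eker a b c z‖ = Real.exp (c.re*z^4 + (c*b).re*z^2 + (c*a).re*z) := by
  unfold Eker
  rw [Complex.norm_exp]
  congr 1
  have h : c * ((z : ℂ) ^ 4 + b * (z : ℂ) ^ 2 + a * (z : ℂ))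
      = ((z^4 : ℝ) : ℂ) * c + ((z^2 : ℝ) : ℂ) * (c*b) + ((z:ℝ):ℂ) * (c*a) := by
    push_cast; ring
  rw [h]
  simp only [Complex.add_re, Complex.re_ofReal_mul]
  ring

lemma exp_dominate (n : ℕ) (z : ℝ) : |z|^n ≤ Real.exp ((n:ℝ) * |z|) := by
  have h1 : |z| ≤ Real.exp |z| := (Real.add_one_le_exp _).trans' (by linarith)
  calc |z|^n ≤ (Real.exp |z|)^n := pow_le_pow_left₀ (abs_nonneg z) h1 n
    _ = Real.exp ((n:ℝ) * |z|) := by rw [← Real.exp_nat_mul]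

lemma norm_pow_Eker_le (n : ℕ) (a b c : ℂ) (γ : ℝ) (hγ : ‖c*a‖ ≤ γ) (z : ℝ) :
    ‖(z:ℂ)^n * Eker a b c z‖ ≤ Real.exp (c.re*z^4 + ‖c*b‖*z^2 + (γ+n)*|z|) := by
  rw [norm_mul, norm_Eker]
  have h1 : ‖(z:ℂ)^n‖ = |z|^n := by
    rw [norm_pow, Complex.norm_real, Real.norm_eq_abs]
  rw [h1]
  calc |z|^n * Real.exp (c.re*z^4 + (c*b).re*z^2 + (c*a).re*z)
      ≤ Real.exp ((n:ℝ)*|z|) * Real.exp (c.re*z^4 + ‖c*b‖*z^2 + γ*|z|) := by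
        apply mul_le_mul (exp_dominate n z) ?_ (Real.exp_nonneg _) (Real.exp_nonneg _)
        apply Real.exp_le_exp.2
        have h2 : (c*b).re*z^2 ≤ ‖c*b‖*z^2 := by
          apply mul_le_mul_of_nonneg_right (Complex.re_le_norm _) (sq_nonneg z)
        have h3 : (c*a).re*z ≤ γ*|z| := by
          calc (c*a).re*z ≤ |(c*a).re*z| := le_abs_self _
            _ = |(c*a).re| * |z| := abs_mul _ _
            _ ≤ γ * |z| :=
                mul_le_mul_of_nonneg_right ((Complex.abs_re_le_norm _).trans hγ) (abs_nonneg z)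
        linarith
    _ = Real.exp (c.re*z^4 + ‖c*b‖*z^2 + (γ+n)*|z|) := by
        rw [← Real.exp_add]; congr 1; ring

lemma integrable_pow_Eker (n : ℕ) (a b c : ℂ) (hc : c.re < 0) :
    Integrable (fun z : ℝ => (z:ℂ)^n * Eker a b c z) := by
  refine (integR c.re ‖c*b‖ (‖c*a‖+n) hc).mono' ?_ ?_
  · exact (Continuous.mul (by continuity) (Eker_continuous a b c)).aestronglyMeasurable
  · exact ae_of_all _ fun z => norm_pow_Eker_le n a b c ‖c*a‖ le_rfl z




noncomputable def Iker (m : ℕ) (a b c : ℂ) : ℂ := ∫ z : ℝ, (z:ℂ)^m * Eker a b c z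

lemma hasDerivAt_Eker_a (b c : ℂ) (z : ℝ) (w : ℂ) :
    HasDerivAt (fun w => Eker w b c z) (c * (z:ℂ) * Eker w b c z) w := by
  have h1 : HasDerivAt (fun w : ℂ => c*((z:ℂ)^4 + b*(z:ℂ)^2 + w*(z:ℂ))) (c*(z:ℂ)) w := by
    simpa using (((hasDerivAt_id w).mul_const ((z:ℂ))).const_add ((z:ℂ)^4+b*(z:ℂ)^2)).const_mul c
  simpa [Eker, mul_comm] using h1.cexp

lemma hasDerivAt_Eker_b (a c : ℂ) (z : ℝ) (w : ℂ) :
    HasDerivAt (fun w => Eker a w c z) (c * (z:ℂ)^2 * Eker a w c z) w := by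
  have h1 : HasDerivAt (fun w : ℂ => c*((z:ℂ)^4 + w*(z:ℂ)^2 + a*(z:ℂ))) (c*(z:ℂ)^2) w := by
    have h0 : (fun w : ℂ => c*((z:ℂ)^4 + w*(z:ℂ)^2 + a*(z:ℂ)))
        = fun w : ℂ => c*(w*(z:ℂ)^2 + ((z:ℂ)^4 + a*(z:ℂ))) := by
      funext w; ring
    rw [h0]
    simpa using (((hasDerivAt_id w).mul_const ((z:ℂ)^2)).add_const ((z:ℂ)^4+a*(z:ℂ))).const_mul c
  simpa [Eker, mul_comm] using h1.cexp

lemma hasDerivAt_Iker_a (m : ℕ) (a b c : ℂ) (hc : c.re < 0) :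
    HasDerivAt (fun w => Iker m w b c) (c * Iker (m+1) a b c) a := by
  have key := hasDerivAt_integral_of_dominated_loc_of_deriv_le (μ := volume)
    (F := fun w (z : ℝ) => (z:ℂ)^m * Eker w b c z)
    (F' := fun w (z : ℝ) => c * ((z:ℂ)^(m+1) * Eker w b c z))
    (x₀ := a)
    (bound := fun z : ℝ =>
      ‖c‖ * Real.exp (c.re*z^4 + ‖c*b‖*z^2 + ((‖c‖*(‖a‖+1))+(m+1))*|z|))
    (ball_mem_nhds a one_pos)
    (Eventually.of_forall fun w =>
      ((continuous_ofReal.pow m).mul (Eker_continuous w b c)).aestronglyMeasurable)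
    (integrable_pow_Eker m a b c hc)
    ((continuous_const.mul ((continuous_ofReal.pow (m+1)).mul
      (Eker_continuous a b c))).aestronglyMeasurable)
    (ae_of_all _ fun z w hw => by
      rw [norm_mul]
      have hγ : ‖c*w‖ ≤ ‖c‖*(‖a‖+1) := by
        rw [norm_mul]
        apply mul_le_mul_of_nonneg_left ?_ (norm_nonneg c)
        have : ‖w - a‖ < 1 := mem_ball_iff_norm.1 hw
        calc ‖w‖ = ‖a + (w - a)‖ := by ring_nf
          _ ≤ ‖a‖ + ‖w - a‖ := norm_add_le _ _
          _ ≤ ‖a‖ + 1 := by linarith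
      have := norm_pow_Eker_le (m+1) w b c (‖c‖*(‖a‖+1)) hγ z
      calc ‖c‖ * ‖(z:ℂ)^(m+1) * Eker w b c z‖
          ≤ ‖c‖ * Real.exp (c.re*z^4 + ‖c*b‖*z^2 + ((‖c‖*(‖a‖+1))+(m+1))*|z|) := by
            apply mul_le_mul_of_nonneg_left ?_ (norm_nonneg c)
            simpa using this)
    ((integR c.re ‖c*b‖ ((‖c‖*(‖a‖+1))+(m+1)) hc).const_mul ‖c‖)
    (ae_of_all _ fun z w hw => by
      have h := (hasDerivAt_Eker_a b c z w).const_mul ((z:ℂ)^m)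
      exact h.congr_deriv (by ring))
  have h2 := key.2
  have : (∫ z : ℝ, c * ((z:ℂ)^(m+1) * Eker a b c z)) = c * Iker (m+1) a b c := by
    simp_rw [← smul_eq_mul (a := c), integral_smul]
    rfl
  rwa [this] at h2

lemma hasDerivAt_Iker_b (m : ℕ) (a b c : ℂ) (hc : c.re < 0) :
    HasDerivAt (fun w => Iker m a w c) (c * Iker (m+2) a b c) b := by
  have key := hasDerivAt_integral_of_dominated_loc_of_deriv_le (μ := volume)
    (F := fun w (z : ℝ) => (z:ℂ)^m * Eker a w c z)
    (F' := fun w (z : ℝ) => c * ((z:ℂ)^(m+2) * Eker a w c z))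
    (x₀ := b)
    (bound := fun z : ℝ =>
      ‖c‖ * Real.exp (c.re*z^4 + (‖c‖*(‖b‖+1))*z^2 + (‖c*a‖+(m+2))*|z|))
    (ball_mem_nhds b one_pos)
    (Eventually.of_forall fun w =>
      ((continuous_ofReal.pow m).mul (Eker_continuous a w c)).aestronglyMeasurable)
    (integrable_pow_Eker m a b c hc)
    ((continuous_const.mul ((continuous_ofReal.pow (m+2)).mul
      (Eker_continuous a b c))).aestronglyMeasurable)
    (ae_of_all _ fun z w hw => by
      rw [norm_mul]
      have hγ : ‖c*w‖ ≤ ‖c‖*(‖b‖+1) := by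
        rw [norm_mul]
        apply mul_le_mul_of_nonneg_left ?_ (norm_nonneg c)
        have : ‖w - b‖ < 1 := mem_ball_iff_norm.1 hw
        calc ‖w‖ = ‖b + (w - b)‖ := by ring_nf
          _ ≤ ‖b‖ + ‖w - b‖ := norm_add_le _ _
          _ ≤ ‖b‖ + 1 := by linarith
      have := norm_pow_Eker_le (m+2) a w c ‖c*a‖ le_rfl z
      calc ‖c‖ * ‖(z:ℂ)^(m+2) * Eker a w c z‖
          ≤ ‖c‖ * Real.exp (c.re*z^4 + (‖c‖*(‖b‖+1))*z^2 + (‖c*a‖+(m+2))*|z|) := by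
            apply mul_le_mul_of_nonneg_left ?_ (norm_nonneg c)
            refine (norm_pow_Eker_le (m+2) a w c ‖c*a‖ le_rfl z).trans ?_
            apply Real.exp_le_exp.2
            have : ‖c*w‖*z^2 ≤ (‖c‖*(‖b‖+1))*z^2 :=
              mul_le_mul_of_nonneg_right hγ (sq_nonneg z)
            push_cast
            linarith)
    ((integR c.re (‖c‖*(‖b‖+1)) (‖c*a‖+(m+2)) hc).const_mul ‖c‖)
    (ae_of_all _ fun z w hw => by
      have h := (hasDerivAt_Eker_b a c z w).const_mul ((z:ℂ)^m)
      exact h.congr_deriv (by ring))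
  have h2 := key.2
  have : (∫ z : ℝ, c * ((z:ℂ)^(m+2) * Eker a b c z)) = c * Iker (m+2) a b c := by
    simp_rw [← smul_eq_mul (a := c), integral_smul]
    rfl
  rwa [this] at h2





lemma tendsto_exp_quartic (K : ℝ) :
    Tendsto (fun z : ℝ => Real.exp (-z^2 + K)) atTop (𝓝 0) ∧
    Tendsto (fun z : ℝ => Real.exp (-z^2 + K)) atBot (𝓝 0) := by
  have hsqTop : Tendsto (fun z : ℝ => z^2) atTop atTop := tendsto_pow_atTop two_ne_zero
  have hsqBot : Tendsto (fun z : ℝ => z^2) atBot atTop := by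
    have h := (tendsto_pow_atTop (α := ℝ) two_ne_zero).comp tendsto_abs_atBot_atTop
    simpa [Function.comp_def, _root_.sq_abs] using h
  constructor <;>
  · refine Real.tendsto_exp_atBot.comp ?_
    apply tendsto_atBot_add_const_right
    exact tendsto_neg_atTop_atBot.comp (by assumption)

lemma tendsto_pow_Eker (n : ℕ) (a b c : ℂ) (hc : c.re < 0) :
    Tendsto (fun z : ℝ => (z:ℂ)^n * Eker a b c z) atTop (𝓝 0) ∧
    Tendsto (fun z : ℝ => (z:ℂ)^n * Eker a b c z) atBot (𝓝 0) := by
  obtain ⟨K, hK⟩ := quartic_bound c.re ‖c*b‖ (‖c*a‖+n) hc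
  have hb : ∀ z : ℝ, ‖(z:ℂ)^n * Eker a b c z‖ ≤ Real.exp (-z^2 + K) := fun z => by
    refine (norm_pow_Eker_le n a b c ‖c*a‖ le_rfl z).trans (Real.exp_le_exp.2 ?_)
    have := hK z; push_cast; linarith
  exact ⟨squeeze_zero_norm hb (tendsto_exp_quartic K).1,
    squeeze_zero_norm hb (tendsto_exp_quartic K).2⟩

lemma integral_deriv_eq_zero (g g' : ℝ → ℂ) (hd : ∀ z, HasDerivAt g (g' z) z)
    (hi : Integrable g') (htop : Tendsto g atTop (𝓝 0)) (hbot : Tendsto g atBot (𝓝 0)) :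
    ∫ z : ℝ, g' z = 0 := by
  have h1 := integral_Ioi_of_hasDerivAt_of_tendsto' (a := 0) (fun x _ => hd x)
    hi.integrableOn htop
  have h2 := integral_Iic_of_hasDerivAt_of_tendsto' (a := 0) (fun x _ => hd x)
    hi.integrableOn hbot
  rw [← intervalIntegral.integral_Iic_add_Ioi (b := (0:ℝ)) hi.integrableOn hi.integrableOn, h1, h2]
  ring

lemma hasDerivAt_Eker_z (a b c : ℂ) (z : ℝ) :
    HasDerivAt (fun t : ℝ => Eker a b c t)
      (c*(4*(z:ℂ)^3+2*b*(z:ℂ)+a) * Eker a b c z) z := by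
  have hpoly : HasDerivAt (fun u : ℂ => c*(u^4 + b*u^2 + a*u)) (c*(4*(z:ℂ)^3+2*b*(z:ℂ)+a)) (z:ℂ) := by
    have h1 : HasDerivAt (fun u : ℂ => u^4 + b*u^2 + a*u)
        (4*(z:ℂ)^3 + 2*b*(z:ℂ) + a) (z:ℂ) := by
      have := ((hasDerivAt_pow 4 ((z:ℂ))).add
        (((hasDerivAt_pow 2 ((z:ℂ)))).const_mul b)).add ((hasDerivAt_id ((z:ℂ))).const_mul a)
      exact this.congr_deriv (by push_cast; ring)
    simpa using h1.const_mul c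
  have := (hpoly.cexp).comp_ofReal
  simpa [Eker, mul_comm] using this

lemma hasDerivAt_zEker_z (a b c : ℂ) (z : ℝ) :
    HasDerivAt (fun t : ℝ => (t:ℂ) * Eker a b c t)
      (Eker a b c z + (z:ℂ)*(c*(4*(z:ℂ)^3+2*b*(z:ℂ)+a)) * Eker a b c z) z := by
  have h := ((hasDerivAt_id z).ofReal_comp).mul (hasDerivAt_Eker_z a b c z)
  refine h.congr_deriv ?_
  simp only [id_eq, ofReal_one, one_mul]
  ring

lemma sumI1_zero (a b c : ℂ) (hc : c.re < 0) :
    (4*c)*Iker 3 a b c + (2*b*c)*Iker 1 a b c + (c*a)*Iker 0 a b c = 0 := by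
  have hint : Integrable (fun z : ℝ => c*(4*(z:ℂ)^3+2*b*(z:ℂ)+a) * Eker a b c z) := by
    have h3 := (integrable_pow_Eker 3 a b c hc).const_mul (4*c)
    have h1 := (integrable_pow_Eker 1 a b c hc).const_mul (2*b*c)
    have h0 := (integrable_pow_Eker 0 a b c hc).const_mul (c*a)
    have := (h3.add h1).add h0
    refine this.congr (ae_of_all _ fun z => ?_)
    simp only [Pi.add_apply]
    push_cast; ring
  have hz := integral_deriv_eq_zero (Eker a b c) _ (hasDerivAt_Eker_z a b c) hint
    ((tendsto_pow_Eker 0 a b c hc).1.congr (fun z => by simp))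
    ((tendsto_pow_Eker 0 a b c hc).2.congr (fun z => by simp))
  have h3 := (integrable_pow_Eker 3 a b c hc).const_mul (4*c)
  have h1 := (integrable_pow_Eker 1 a b c hc).const_mul (2*b*c)
  have h0 := (integrable_pow_Eker 0 a b c hc).const_mul (c*a)
  have hsplit : (fun z : ℝ => c*(4*(z:ℂ)^3+2*b*(z:ℂ)+a) * Eker a b c z)
      = fun z : ℝ => ((4*c)*((z:ℂ)^3*Eker a b c z) + (2*b*c)*((z:ℂ)^1*Eker a b c z))
        + (c*a)*((z:ℂ)^0*Eker a b c z) := by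
    funext z; push_cast; ring
  rw [hsplit] at hz
  have h31 : Integrable (fun z : ℝ => 4*c*((z:ℂ)^3*Eker a b c z)
      + 2*b*c*((z:ℂ)^1*Eker a b c z)) volume := h3.add h1
  rw [integral_add h31 h0, integral_add h3 h1, integral_const_mul, integral_const_mul,
    integral_const_mul] at hz
  exact hz

lemma sumI2_zero (a b c : ℂ) (hc : c.re < 0) :
    Iker 0 a b c + (4*c)*Iker 4 a b c + (2*b*c)*Iker 2 a b c + (c*a)*Iker 1 a b c = 0 := by
  have hint : Integrable (fun z : ℝ =>
      Eker a b c z + (z:ℂ)*(c*(4*(z:ℂ)^3+2*b*(z:ℂ)+a)) * Eker a b c z) := by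
    have h4 := (integrable_pow_Eker 4 a b c hc).const_mul (4*c)
    have h2 := (integrable_pow_Eker 2 a b c hc).const_mul (2*b*c)
    have h1 := (integrable_pow_Eker 1 a b c hc).const_mul (c*a)
    have h0 := integrable_pow_Eker 0 a b c hc
    have := (h0.add h4).add (h2.add h1)
    refine this.congr (ae_of_all _ fun z => ?_)
    simp only [Pi.add_apply]
    push_cast; ring
  have hz := integral_deriv_eq_zero (fun t : ℝ => (t:ℂ) * Eker a b c t) _
    (hasDerivAt_zEker_z a b c) hint
    ((tendsto_pow_Eker 1 a b c hc).1.congr (fun z => by simp))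
    ((tendsto_pow_Eker 1 a b c hc).2.congr (fun z => by simp))
  have h4 := (integrable_pow_Eker 4 a b c hc).const_mul (4*c)
  have h2 := (integrable_pow_Eker 2 a b c hc).const_mul (2*b*c)
  have h1 := (integrable_pow_Eker 1 a b c hc).const_mul (c*a)
  have h0 := integrable_pow_Eker 0 a b c hc
  have hsplit : (fun z : ℝ =>
      Eker a b c z + (z:ℂ)*(c*(4*(z:ℂ)^3+2*b*(z:ℂ)+a)) * Eker a b c z)
      = fun z : ℝ => ((z:ℂ)^0*Eker a b c z + (4*c)*((z:ℂ)^4*Eker a b c z))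
        + ((2*b*c)*((z:ℂ)^2*Eker a b c z) + (c*a)*((z:ℂ)^1*Eker a b c z)) := by
    funext z; push_cast; ring
  rw [hsplit] at hz
  have h04 : Integrable (fun z : ℝ => (z:ℂ)^0*Eker a b c z
      + 4*c*((z:ℂ)^4*Eker a b c z)) volume := h0.add h4
  have h21 : Integrable (fun z : ℝ => 2*b*c*((z:ℂ)^2*Eker a b c z)
      + c*a*((z:ℂ)^1*Eker a b c z)) volume := h2.add h1
  rw [integral_add h04 h21, integral_add h0 h4, integral_add h2 h1,
    integral_const_mul, integral_const_mul, integral_const_mul] at hz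
  unfold Iker
  linear_combination hz
lemma pearcey_eq_Iker (a b c : ℂ) : pearcey a b c = Iker 0 a b c := by
  unfold pearcey Iker Eker
  simp only [pow_zero, one_mul]

lemma D1_pearcey (a b c : ℂ) (hc : c.re < 0) : D1 pearcey a b c = c * Iker 1 a b c := by
  unfold D1
  rw [show (fun w => pearcey w b c) = fun w => Iker 0 w b c from
    funext fun w => pearcey_eq_Iker w b c]
  exact (hasDerivAt_Iker_a 0 a b c hc).deriv

lemma D2_pearcey (a b c : ℂ) (hc : c.re < 0) : D2 pearcey a b c = c * Iker 2 a b c := by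
  unfold D2
  rw [show (fun w => pearcey a w c) = fun w => Iker 0 a w c from
    funext fun w => pearcey_eq_Iker a w c]
  exact (hasDerivAt_Iker_b 0 a b c hc).deriv

lemma D1D2_pearcey (a b c : ℂ) (hc : c.re < 0) :
    D1 (D2 pearcey) a b c = c * (c * Iker 3 a b c) := by
  rw [show D1 (D2 pearcey) a b c = deriv (fun w => D2 pearcey w b c) a from rfl]
  rw [show (fun w => D2 pearcey w b c) = fun w => c * Iker 2 w b c from
    funext fun w => D2_pearcey w b c hc]
  exact ((hasDerivAt_Iker_a 2 a b c hc).const_mul c).deriv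

lemma D2D2_pearcey (a b c : ℂ) (hc : c.re < 0) :
    D2 (D2 pearcey) a b c = c * (c * Iker 4 a b c) := by
  rw [show D2 (D2 pearcey) a b c = deriv (fun w => D2 pearcey a w c) b from rfl]
  rw [show (fun w => D2 pearcey a w c) = fun w => c * Iker 2 a w c from
    funext fun w => D2_pearcey a w c hc]
  exact ((hasDerivAt_Iker_b 2 a b c hc).const_mul c).deriv

lemma D1D1_pearcey (a b c : ℂ) (hc : c.re < 0) :
    D1 (D1 pearcey) a b c = c * (c * Iker 2 a b c) := by
  rw [show D1 (D1 pearcey) a b c = deriv (fun w => D1 pearcey w b c) a from rfl]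
  rw [show (fun w => D1 pearcey w b c) = fun w => c * Iker 1 w b c from
    funext fun w => D1_pearcey w b c hc]
  exact ((hasDerivAt_Iker_a 1 a b c hc).const_mul c).deriv

lemma pearcey_PDEs (a b c : ℂ) (hc : c.re < 0) :
    P1 pearcey a b c = 0 ∧ P2 pearcey a b c = 0 ∧ P3 pearcey a b c = 0 := by
  refine ⟨?_, ?_, ?_⟩
  · unfold P1
    rw [D1D2_pearcey a b c hc, D1_pearcey a b c hc, pearcey_eq_Iker]
    linear_combination c * sumI1_zero a b c hc
  · unfold P2
    rw [D2D2_pearcey a b c hc, D1_pearcey a b c hc, D2_pearcey a b c hc, pearcey_eq_Iker]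
    linear_combination c * sumI2_zero a b c hc
  · unfold P3
    rw [D2_pearcey a b c hc, D1D1_pearcey a b c hc]
    ring



lemma exp_taylor2 (w : ℂ) : ‖Complex.exp w - 1 - w‖ ≤ 3*‖w‖^2*Real.exp ‖w‖ := by
  have hexp1 : (1:ℝ) ≤ Real.exp ‖w‖ := Real.one_le_exp (norm_nonneg w)
  by_cases hw : ‖w‖ ≤ 1
  · have h := Complex.norm_exp_sub_one_sub_id_le (x := w) hw
    nlinarith [sq_nonneg ‖w‖, norm_nonneg w]
  · push_neg at hw
    have h1 : ‖Complex.exp w - 1 - w‖ ≤ Real.exp ‖w‖ + 1 + ‖w‖ := by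
      calc ‖Complex.exp w - 1 - w‖ ≤ ‖Complex.exp w - 1‖ + ‖w‖ := norm_sub_le _ _
        _ ≤ ‖Complex.exp w‖ + ‖(1:ℂ)‖ + ‖w‖ := by
            have := norm_sub_le (Complex.exp w) 1; linarith
        _ ≤ Real.exp ‖w‖ + 1 + ‖w‖ := by
            have h2 : ‖Complex.exp w‖ = Real.exp w.re := by
              rw [Complex.norm_exp]
            have h3 : w.re ≤ ‖w‖ := (Complex.re_le_norm w)
            simp only [norm_one]
            have := Real.exp_le_exp.2 h3
            linarith [h2 ▸ this]
    nlinarith [sq_nonneg (‖w‖ - 1)]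

lemma norm_exp_poly (u v : ℂ) (k : ℕ) (z : ℝ) :
    ‖Complex.exp (u*(z:ℂ)^4 + v*(z:ℂ)^k)‖ = Real.exp (u.re*z^4 + v.re*z^k) := by
  rw [Complex.norm_exp]
  congr 1
  have h : u*(z:ℂ)^4 + v*(z:ℂ)^k = ((z^4:ℝ):ℂ)*u + ((z^k:ℝ):ℂ)*v := by push_cast; ring
  rw [h]
  simp only [Complex.add_re, Complex.re_ofReal_mul]
  ring

noncomputable def mkBCF (f : ℝ → ℂ) (hf : Continuous f) (h : ∃ C, ∀ z, ‖f z‖ ≤ C) : ℝ →ᵇ ℂ :=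
  BoundedContinuousFunction.ofNormedAddCommGroup f hf h.choose h.choose_spec

@[simp] lemma coe_mkBCF (f : ℝ → ℂ) (hf : Continuous f) (h : ∃ C, ∀ z, ‖f z‖ ≤ C) :
    ⇑(mkBCF f hf h) = f := rfl

lemma Wbound (w : ℂ) (n : ℕ) (hw : w.re < 0) :
    ∃ C, ∀ z : ℝ, ‖(z:ℂ)^n * Complex.exp (w*(z:ℂ)^4)‖ ≤ C := by
  obtain ⟨K, hK⟩ := quartic_bound' w.re 0 n hw
  refine ⟨Real.exp K, fun z => ?_⟩
  rw [norm_mul]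
  have h1 : ‖(z:ℂ)^n‖ = |z|^n := by rw [norm_pow, Complex.norm_real, Real.norm_eq_abs]
  have h2 : ‖Complex.exp (w*(z:ℂ)^4)‖ = Real.exp (w.re*z^4) := by
    have := norm_exp_poly w 0 0 z
    simpa using this
  rw [h1, h2]
  calc |z|^n * Real.exp (w.re*z^4) ≤ Real.exp ((n:ℝ)*|z|) * Real.exp (w.re*z^4) :=
        mul_le_mul_of_nonneg_right (exp_dominate n z) (Real.exp_nonneg _)
    _ = Real.exp (w.re*z^4 + 0*z^2 + (n:ℝ)*|z|) := by rw [← Real.exp_add]; congr 1; ring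
    _ ≤ Real.exp K := Real.exp_le_exp.2 (hK z)

lemma Phibound (c v : ℂ) (n k : ℕ) (hc : c.re < 0) (hk1 : 1 ≤ k) (hk2 : k ≤ 2) :
    ∃ C, ∀ z : ℝ, ‖(z:ℂ)^n * Complex.exp (c*(z:ℂ)^4 + v*(z:ℂ)^k)‖ ≤ C := by
  obtain ⟨K, hK⟩ := quartic_bound' c.re (‖v‖) (‖v‖ + n) hc
  refine ⟨Real.exp K, fun z => ?_⟩
  rw [norm_mul]
  have h1 : ‖(z:ℂ)^n‖ = |z|^n := by rw [norm_pow, Complex.norm_real, Real.norm_eq_abs]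
  rw [h1, norm_exp_poly]
  have habs : |z|^k ≤ z^2 + |z| := by
    interval_cases k
    · simpa using le_add_of_nonneg_left (a := |z|) (sq_nonneg z)
    · rw [_root_.sq_abs]; exact le_add_of_nonneg_right (abs_nonneg z)
  have hv : v.re*z^k ≤ ‖v‖*(z^2 + |z|) := by
    calc v.re*z^k ≤ |v.re*z^k| := le_abs_self _
      _ = |v.re| * |z|^k := by rw [abs_mul, _root_.abs_pow]
      _ ≤ ‖v‖ * (z^2 + |z|) := by
          apply mul_le_mul (Complex.abs_re_le_norm v) habs (by positivity) (norm_nonneg v)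
  calc |z|^n * Real.exp (c.re*z^4 + v.re*z^k)
      ≤ Real.exp ((n:ℝ)*|z|) * Real.exp (c.re*z^4 + v.re*z^k) :=
        mul_le_mul_of_nonneg_right (exp_dominate n z) (Real.exp_nonneg _)
    _ = Real.exp (c.re*z^4 + v.re*z^k + (n:ℝ)*|z|) := by rw [← Real.exp_add]; congr 1; ring
    _ ≤ Real.exp K := by
        apply Real.exp_le_exp.2
        have := hK z
        nlinarith [abs_nonneg z, norm_nonneg v]




/-- key pointwise second-order estimate -/
lemma key_pt (u v δ : ℂ) (k : ℕ) (ρ : ℝ) (hδ : ‖δ‖ ≤ ρ) (z : ℝ) :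
    ‖Complex.exp (u*(z:ℂ)^4 + (v+δ)*(z:ℂ)^k) - Complex.exp (u*(z:ℂ)^4 + v*(z:ℂ)^k)
      - δ*((z:ℂ)^k * Complex.exp (u*(z:ℂ)^4 + v*(z:ℂ)^k))‖
    ≤ 3*‖δ‖^2 * Real.exp (u.re*z^4 + v.re*z^k + ρ*|z|^k + (2*(k:ℝ))*|z|) := by
  have hfact : Complex.exp (u*(z:ℂ)^4 + (v+δ)*(z:ℂ)^k) - Complex.exp (u*(z:ℂ)^4 + v*(z:ℂ)^k)
      - δ*((z:ℂ)^k * Complex.exp (u*(z:ℂ)^4 + v*(z:ℂ)^k))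
      = Complex.exp (u*(z:ℂ)^4 + v*(z:ℂ)^k) * (Complex.exp (δ*(z:ℂ)^k) - 1 - δ*(z:ℂ)^k) := by
    rw [show u*(z:ℂ)^4 + (v+δ)*(z:ℂ)^k = (u*(z:ℂ)^4 + v*(z:ℂ)^k) + δ*(z:ℂ)^k by ring,
      Complex.exp_add]
    ring
  rw [hfact, norm_mul, norm_exp_poly]
  have hnd : ‖δ*(z:ℂ)^k‖ = ‖δ‖*|z|^k := by
    rw [norm_mul, norm_pow, Complex.norm_real, Real.norm_eq_abs]
  have hB := exp_taylor2 (δ*(z:ℂ)^k)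
  rw [hnd] at hB
  have habs : 0 ≤ |z|^k := by positivity
  have h2 : (‖δ‖*|z|^k)^2 ≤ ‖δ‖^2 * Real.exp ((2*(k:ℝ))*|z|) := by
    calc (‖δ‖*|z|^k)^2 = ‖δ‖^2 * (|z|^k)^2 := by ring
      _ ≤ ‖δ‖^2 * Real.exp ((2*(k:ℝ))*|z|) := by
          apply mul_le_mul_of_nonneg_left ?_ (sq_nonneg _)
          calc (|z|^k)^2 = |z|^(2*k) := by rw [← pow_mul, Nat.mul_comm]
            _ ≤ Real.exp ((2*(k:ℝ))*|z|) := by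
                have := exp_dominate (2*k) z
                simpa using this
  have h3 : Real.exp (‖δ‖*|z|^k) ≤ Real.exp (ρ*|z|^k) :=
    Real.exp_le_exp.2 (mul_le_mul_of_nonneg_right hδ habs)
  calc Real.exp (u.re*z^4 + v.re*z^k) * ‖Complex.exp (δ*(z:ℂ)^k) - 1 - δ*(z:ℂ)^k‖
      ≤ Real.exp (u.re*z^4 + v.re*z^k) * (3*(‖δ‖*|z|^k)^2*Real.exp (‖δ‖*|z|^k)) :=
        mul_le_mul_of_nonneg_left hB (Real.exp_nonneg _)
    _ ≤ Real.exp (u.re*z^4 + v.re*z^k) *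
        (3*(‖δ‖^2 * Real.exp ((2*(k:ℝ))*|z|))*Real.exp (ρ*|z|^k)) := by
        apply mul_le_mul_of_nonneg_left ?_ (Real.exp_nonneg _)
        apply mul_le_mul (by linarith) h3 (Real.exp_nonneg _) (by positivity)
    _ = 3*‖δ‖^2 * (Real.exp (u.re*z^4 + v.re*z^k) * Real.exp ((2*(k:ℝ))*|z|)
        * Real.exp (ρ*|z|^k)) := by ring
    _ = 3*‖δ‖^2 * Real.exp (u.re*z^4 + v.re*z^k + ρ*|z|^k + (2*(k:ℝ))*|z|) := by
        rw [← Real.exp_add, ← Real.exp_add]; congr 1; ring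

lemma hasDerivAt_of_sq_bound {F : ℂ → ℝ →ᵇ ℂ} {y₀ : ℂ} {D : ℝ →ᵇ ℂ} {ε C : ℝ} (hε : 0 < ε)
    (h : ∀ y : ℂ, ‖y - y₀‖ ≤ ε → ‖F y - F y₀ - (y - y₀) • D‖ ≤ C * ‖y - y₀‖^2) :
    HasDerivAt F D y₀ := by
  rw [hasDerivAt_iff_isLittleO]
  have h1 : (fun y => F y - F y₀ - (y - y₀) • D) =O[𝓝 y₀] fun y => ‖y - y₀‖^2 := by
    apply Asymptotics.IsBigO.of_bound C
    filter_upwards [closedBall_mem_nhds y₀ hε] with y hy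
    rw [Real.norm_of_nonneg (sq_nonneg _)]
    exact h y (mem_closedBall_iff_norm.1 hy)
  refine h1.trans_isLittleO ?_
  rw [Asymptotics.isLittleO_iff]
  intro ε' hε'
  filter_upwards [closedBall_mem_nhds y₀ hε'] with y hy
  have h2 := mem_closedBall_iff_norm.1 hy
  rw [Real.norm_of_nonneg (sq_nonneg _), pow_two]
  exact mul_le_mul_of_nonneg_right h2 (norm_nonneg _)

noncomputable def Wfun (c y : ℂ) : ℝ →ᵇ ℂ :=
  if h : (c+y).re < 0 then
    mkBCF (fun z => Complex.exp ((c+y)*(z:ℂ)^4)) (by continuity)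
      ((Wbound (c+y) 0 h).imp fun C hC z => by simpa using hC z)
  else 0

noncomputable def WD (c y : ℂ) : ℝ →ᵇ ℂ :=
  if h : (c+y).re < 0 then
    mkBCF (fun z => (z:ℂ)^4 * Complex.exp ((c+y)*(z:ℂ)^4)) (by continuity)
      (Wbound (c+y) 4 h)
  else 0

noncomputable def Phi (k : ℕ) (c y : ℂ) : ℝ →ᵇ ℂ :=
  if h : c.re < 0 ∧ 1 ≤ k ∧ k ≤ 2 then
    mkBCF (fun z => Complex.exp (c*(z:ℂ)^4 + y*(z:ℂ)^k)) (by continuity)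
      ((Phibound c y 0 k h.1 h.2.1 h.2.2).imp fun C hC z => by simpa using hC z)
  else 0

noncomputable def PhiD (k : ℕ) (c y : ℂ) : ℝ →ᵇ ℂ :=
  if h : c.re < 0 ∧ 1 ≤ k ∧ k ≤ 2 then
    mkBCF (fun z => (z:ℂ)^k * Complex.exp (c*(z:ℂ)^4 + y*(z:ℂ)^k)) (by continuity)
      (Phibound c y k k h.1 h.2.1 h.2.2)
  else 0

lemma hasDerivAt_Wfun (c y₀ : ℂ) (h0 : (c+y₀).re < 0) :
    HasDerivAt (Wfun c) (WD c y₀) y₀ := by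
  set ε := -(c+y₀).re/2 with hεdef
  have hε : 0 < ε := by simp only [hεdef]; linarith
  obtain ⟨K, hK⟩ := quartic_bound' (-ε) 0 8 (by linarith)
  apply hasDerivAt_of_sq_bound hε (C := 3*Real.exp K)
  intro y hy
  have hyre : (c+y).re < 0 := by
    have h1 : |(y - y₀).re| ≤ ‖y - y₀‖ := Complex.abs_re_le_norm _
    have h2 : (c+y).re = (c+y₀).re + (y - y₀).re := by
      simp [Complex.add_re, Complex.sub_re]
    have h3 := (abs_le.1 h1).2
    rw [h2]
    have : (c+y₀).re = -(2*ε) := by rw [hεdef]; ring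
    linarith
  rw [show Wfun c y = mkBCF (fun z => Complex.exp ((c+y)*(z:ℂ)^4)) (by continuity)
      ((Wbound (c+y) 0 hyre).imp fun C hC z => by simpa using hC z) from dif_pos hyre,
    show Wfun c y₀ = mkBCF (fun z => Complex.exp ((c+y₀)*(z:ℂ)^4)) (by continuity)
      ((Wbound (c+y₀) 0 h0).imp fun C hC z => by simpa using hC z) from dif_pos h0,
    show WD c y₀ = mkBCF (fun z => (z:ℂ)^4 * Complex.exp ((c+y₀)*(z:ℂ)^4)) (by continuity)
      (Wbound (c+y₀) 4 h0) from dif_pos h0]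
  apply (BoundedContinuousFunction.norm_le (by positivity)).2
  intro z
  simp only [coe_sub, BoundedContinuousFunction.coe_smul, Pi.sub_apply, Pi.smul_apply,
    coe_mkBCF, smul_eq_mul]
  have hrw : ∀ w : ℂ, Complex.exp ((c+w)*(z:ℂ)^4)
      = Complex.exp (c*(z:ℂ)^4 + w*(z:ℂ)^4) := fun w => by rw [add_mul]
  rw [hrw y, hrw y₀]
  set δ := y - y₀ with hδ
  rw [show y = y₀ + δ from by rw [hδ]; ring]
  have hkey := key_pt c y₀ δ 4 ε hy z
  refine hkey.trans ?_
  have hz4 : |z|^4 = z^4 := by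
    rw [← _root_.abs_pow]; exact abs_of_nonneg (by positivity)
  have hre : c.re + y₀.re = -(2*ε) := by
    rw [hεdef, Complex.add_re]; ring
  have hsum : c.re*z^4 + y₀.re*z^4 = -(2*ε)*z^4 := by rw [← add_mul, hre]
  have hexp : Real.exp (c.re*z^4 + y₀.re*z^4 + ε*|z|^4 + 2*(4:ℕ)*|z|) ≤ Real.exp K := by
    apply Real.exp_le_exp.2
    rw [hz4]
    have := hK z
    push_cast
    linarith
  calc 3*‖δ‖^2 * Real.exp (c.re*z^4 + y₀.re*z^4 + ε*|z|^4 + 2*(4:ℕ)*|z|)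
      ≤ 3*‖δ‖^2 * Real.exp K := mul_le_mul_of_nonneg_left hexp (by positivity)
    _ = 3*Real.exp K*‖δ‖^2 := by ring

lemma hasDerivAt_Phi (k : ℕ) (c y₀ : ℂ) (hc : c.re < 0) (hk1 : 1 ≤ k) (hk2 : k ≤ 2) :
    HasDerivAt (Phi k c) (PhiD k c y₀) y₀ := by
  have hcond : c.re < 0 ∧ 1 ≤ k ∧ k ≤ 2 := ⟨hc, hk1, hk2⟩
  obtain ⟨K, hK⟩ := quartic_bound' c.re (‖y₀‖+1) (‖y₀‖+1+4) hc
  apply hasDerivAt_of_sq_bound one_pos (C := 3*Real.exp K)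
  intro y hy
  rw [show Phi k c y = mkBCF (fun z => Complex.exp (c*(z:ℂ)^4 + y*(z:ℂ)^k)) (by continuity)
      ((Phibound c y 0 k hcond.1 hcond.2.1 hcond.2.2).imp fun C hC z => by simpa using hC z)
      from dif_pos hcond,
    show Phi k c y₀ = mkBCF (fun z => Complex.exp (c*(z:ℂ)^4 + y₀*(z:ℂ)^k)) (by continuity)
      ((Phibound c y₀ 0 k hcond.1 hcond.2.1 hcond.2.2).imp fun C hC z => by simpa using hC z)
      from dif_pos hcond,
    show PhiD k c y₀ = mkBCF (fun z => (z:ℂ)^k * Complex.exp (c*(z:ℂ)^4 + y₀*(z:ℂ)^k))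
      (by continuity) (Phibound c y₀ k k hcond.1 hcond.2.1 hcond.2.2) from dif_pos hcond]
  apply (BoundedContinuousFunction.norm_le (by positivity)).2
  intro z
  simp only [coe_sub, BoundedContinuousFunction.coe_smul, Pi.sub_apply, Pi.smul_apply,
    coe_mkBCF, smul_eq_mul]
  set δ := y - y₀ with hδ
  rw [show y = y₀ + δ from by rw [hδ]; ring]
  have hkey := key_pt c y₀ δ k 1 hy z
  refine hkey.trans ?_
  have habs : |z|^k ≤ z^2 + |z| := by
    interval_cases k
    · simpa using le_add_of_nonneg_left (a := |z|) (sq_nonneg z)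
    · rw [_root_.sq_abs]; exact le_add_of_nonneg_right (abs_nonneg z)
  have hyk : y₀.re*z^k ≤ ‖y₀‖*(z^2 + |z|) := by
    calc y₀.re*z^k ≤ |y₀.re*z^k| := le_abs_self _
      _ = |y₀.re| * |z|^k := by rw [abs_mul, _root_.abs_pow]
      _ ≤ ‖y₀‖ * (z^2 + |z|) :=
          mul_le_mul (Complex.abs_re_le_norm y₀) habs (by positivity) (norm_nonneg y₀)
  have hexp : Real.exp (c.re*z^4 + y₀.re*z^k + 1*|z|^k + 2*(k:ℝ)*|z|) ≤ Real.exp K := by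
    apply Real.exp_le_exp.2
    have h1 := hK z
    have h2 : 2*(k:ℝ)*|z| ≤ 4*|z| := by
      have : (k:ℝ) ≤ 2 := by exact_mod_cast hk2
      nlinarith [abs_nonneg z]
    nlinarith [abs_nonneg z, norm_nonneg y₀]
  calc 3*‖δ‖^2 * Real.exp (c.re*z^4 + y₀.re*z^k + 1*|z|^k + 2*(k:ℝ)*|z|)
      ≤ 3*‖δ‖^2 * Real.exp K := mul_le_mul_of_nonneg_left hexp (by positivity)
    _ = 3*Real.exp K*‖δ‖^2 := by ring




lemma integrable_exp_quartic (c : ℂ) (hc : c.re < 0) :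
    Integrable (fun z : ℝ => Real.exp (c.re*z^4)) := by
  have := integR c.re 0 0 hc
  simpa using this

lemma ell_integrand (c : ℂ) (hc : c.re < 0) (g : ℝ →ᵇ ℂ) :
    Integrable (fun z : ℝ => Complex.exp (c*(z:ℂ)^4) * g z) := by
  refine ((integrable_exp_quartic c hc).mul_const ‖g‖).mono' ?_ ?_
  · exact ((Complex.continuous_exp.comp (by continuity)).mul g.continuous).aestronglyMeasurable
  · refine ae_of_all _ fun z => ?_
    rw [norm_mul]
    have h1 : ‖Complex.exp (c*(z:ℂ)^4)‖ = Real.exp (c.re*z^4) := by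
      simpa using norm_exp_poly c 0 0 z
    rw [h1]
    exact mul_le_mul_of_nonneg_left (g.norm_coe_le_norm z) (Real.exp_nonneg _)

lemma norm_ell_le (c : ℂ) (hc : c.re < 0) (g : ℝ →ᵇ ℂ) :
    ‖∫ z : ℝ, Complex.exp (c*(z:ℂ)^4) * g z‖ ≤ (∫ z : ℝ, Real.exp (c.re*z^4)) * ‖g‖ := by
  calc ‖∫ z : ℝ, Complex.exp (c*(z:ℂ)^4) * g z‖
      ≤ ∫ z : ℝ, ‖Complex.exp (c*(z:ℂ)^4) * g z‖ := norm_integral_le_integral_norm _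
    _ ≤ ∫ z : ℝ, Real.exp (c.re*z^4) * ‖g‖ := by
        refine integral_mono (ell_integrand c hc g).norm
          ((integrable_exp_quartic c hc).mul_const _) fun z => ?_
        rw [norm_mul]
        have h1 : ‖Complex.exp (c*(z:ℂ)^4)‖ = Real.exp (c.re*z^4) := by
          simpa using norm_exp_poly c 0 0 z
        rw [h1]
        exact mul_le_mul_of_nonneg_left (g.norm_coe_le_norm z) (Real.exp_nonneg _)
    _ = (∫ z : ℝ, Real.exp (c.re*z^4)) * ‖g‖ := integral_mul_const _ _

noncomputable def ell (c : ℂ) (hc : c.re < 0) : (ℝ →ᵇ ℂ) →L[ℂ] ℂ :=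
  LinearMap.mkContinuous
    { toFun := fun g => ∫ z : ℝ, Complex.exp (c*(z:ℂ)^4) * g z
      map_add' := fun g h => by
        have heq : (fun z : ℝ => Complex.exp (c*(z:ℂ)^4) * (g + h) z)
            = fun z : ℝ => Complex.exp (c*(z:ℂ)^4) * g z + Complex.exp (c*(z:ℂ)^4) * h z :=
          funext fun z => by simp [mul_add]
        show (∫ z : ℝ, Complex.exp (c*(z:ℂ)^4) * (g + h) z) = _
        rw [heq, integral_add (ell_integrand c hc g) (ell_integrand c hc h)]
      map_smul' := fun s g => by
        have heq : (fun z : ℝ => Complex.exp (c*(z:ℂ)^4) * (s • g) z)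
            = fun z : ℝ => s * (Complex.exp (c*(z:ℂ)^4) * g z) :=
          funext fun z => by
            simp only [BoundedContinuousFunction.coe_smul, Pi.smul_apply, smul_eq_mul]
            ring
        show (∫ z : ℝ, Complex.exp (c*(z:ℂ)^4) * (s • g) z) = _
        rw [heq, integral_const_mul]
        rfl }
    (∫ z : ℝ, Real.exp (c.re*z^4))
    (fun g => norm_ell_le c hc g)

lemma ell_apply (c : ℂ) (hc : c.re < 0) (g : ℝ →ᵇ ℂ) :
    ell c hc g = ∫ z : ℝ, Complex.exp (c*(z:ℂ)^4) * g z := rfl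

lemma quarter_re (h : ℂ) : (h/4).re = h.re/4 := by
  rw [show (4:ℂ) = ((4:ℝ):ℂ) by norm_num, Complex.div_ofReal_re]

lemma pearcey_rep (h : ℂ) (hh : h.re < 0) (x₁ x₂ η : ℂ)
    (hη : (h/4 + (η - h)).re < 0) :
    pearcey x₁ x₂ η = ell (h/4) (by rw [quarter_re]; linarith)
      (Wfun (h/4) (η - h) * Phi 2 (h/4) (η*x₂) * Phi 1 (h/4) (η*x₁)) := by
  have hc4 : (h/4).re < 0 := by rw [quarter_re]; linarith
  rw [ell_apply, pearcey]
  congr 1; funext z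
  rw [show Wfun (h/4) (η - h) = mkBCF (fun z => Complex.exp ((h/4+(η-h))*(z:ℂ)^4))
      (by continuity) ((Wbound (h/4+(η-h)) 0 hη).imp fun C hC z => by simpa using hC z)
      from dif_pos hη,
    show Phi 2 (h/4) (η*x₂) = mkBCF (fun z => Complex.exp ((h/4)*(z:ℂ)^4 + (η*x₂)*(z:ℂ)^2))
      (by continuity) ((Phibound (h/4) (η*x₂) 0 2 hc4 one_le_two le_rfl).imp
        fun C hC z => by simpa using hC z) from dif_pos ⟨hc4, one_le_two, le_rfl⟩,
    show Phi 1 (h/4) (η*x₁) = mkBCF (fun z => Complex.exp ((h/4)*(z:ℂ)^4 + (η*x₁)*(z:ℂ)^1))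
      (by continuity) ((Phibound (h/4) (η*x₁) 0 1 hc4 le_rfl one_le_two).imp
        fun C hC z => by simpa using hC z) from dif_pos ⟨hc4, le_rfl, one_le_two⟩]
  simp only [BoundedContinuousFunction.coe_mul, Pi.mul_apply, coe_mkBCF]
  rw [← Complex.exp_add, ← Complex.exp_add, ← Complex.exp_add]
  congr 1
  ring

set_option maxHeartbeats 1000000 in
lemma pearcey_analyticOnNhd :
    AnalyticOnNhd ℂ (fun p : ℂ × ℂ × ℂ => pearcey p.1 p.2.1 p.2.2)
      {p : ℂ × ℂ × ℂ | p.2.2.re < 0} := by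
  intro p hp
  have hh : p.2.2.re < 0 := hp
  set h := p.2.2 with hhdef
  have hc4 : (h/4).re < 0 := by rw [quarter_re]; linarith
  have h22 : AnalyticAt ℂ (fun q : ℂ × ℂ × ℂ => q.2.2) p :=
    (analyticAt_snd (p := p.2)).comp analyticAt_snd
  have h21 : AnalyticAt ℂ (fun q : ℂ × ℂ × ℂ => q.2.1) p :=
    (analyticAt_fst (p := p.2)).comp analyticAt_snd
  have h1a : AnalyticAt ℂ (fun q : ℂ × ℂ × ℂ => q.1) p := analyticAt_fst
  have hWa : AnalyticAt ℂ (Wfun (h/4)) (p.2.2 - h) := by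
    have hU : IsOpen {y : ℂ | (h/4 + y).re < 0} :=
      isOpen_lt (by continuity) continuous_const
    have hd : DifferentiableOn ℂ (Wfun (h/4)) {y : ℂ | (h/4 + y).re < 0} :=
      fun y hy => (hasDerivAt_Wfun (h/4) y hy).differentiableAt.differentiableWithinAt
    refine hd.analyticAt (hU.mem_nhds ?_)
    simp only [mem_setOf_eq, ← hhdef, sub_self, add_zero]
    exact hc4
  have hP2a : AnalyticAt ℂ (Phi 2 (h/4)) (p.2.2*p.2.1) :=
    Differentiable.analyticAt
      (fun y => (hasDerivAt_Phi 2 (h/4) y hc4 one_le_two le_rfl).differentiableAt) _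
  have hP1a : AnalyticAt ℂ (Phi 1 (h/4)) (p.2.2*p.1) :=
    Differentiable.analyticAt
      (fun y => (hasDerivAt_Phi 1 (h/4) y hc4 le_rfl one_le_two).differentiableAt) _
  have hG : AnalyticAt ℂ (fun q : ℂ × ℂ × ℂ =>
      Wfun (h/4) (q.2.2 - h) * Phi 2 (h/4) (q.2.2*q.2.1) * Phi 1 (h/4) (q.2.2*q.1)) p := by
    have hW' : AnalyticAt ℂ (fun q : ℂ × ℂ × ℂ => Wfun (h/4) (q.2.2 - h)) p := by
      have h0 : AnalyticAt ℂ (fun q : ℂ × ℂ × ℂ => q.2.2 - h) p := h22.sub analyticAt_const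
      have := hWa.comp (f := fun q : ℂ × ℂ × ℂ => q.2.2 - h) h0
      simpa [Function.comp_def] using this
    have hP2' : AnalyticAt ℂ (fun q : ℂ × ℂ × ℂ => Phi 2 (h/4) (q.2.2*q.2.1)) p := by
      have h0 : AnalyticAt ℂ (fun q : ℂ × ℂ × ℂ => q.2.2*q.2.1) p := h22.mul h21
      have := hP2a.comp (f := fun q : ℂ × ℂ × ℂ => q.2.2*q.2.1) h0
      simpa [Function.comp_def] using this
    have hP1' : AnalyticAt ℂ (fun q : ℂ × ℂ × ℂ => Phi 1 (h/4) (q.2.2*q.1)) p := by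
      have h0 : AnalyticAt ℂ (fun q : ℂ × ℂ × ℂ => q.2.2*q.1) p := h22.mul h1a
      have := hP1a.comp (f := fun q : ℂ × ℂ × ℂ => q.2.2*q.1) h0
      simpa [Function.comp_def] using this
    exact (hW'.mul hP2').mul hP1'
  have hcomp : AnalyticAt ℂ (fun q : ℂ × ℂ × ℂ => ell (h/4) hc4
      (Wfun (h/4) (q.2.2 - h) * Phi 2 (h/4) (q.2.2*q.2.1) * Phi 1 (h/4) (q.2.2*q.1))) p := by
    have := ((ell (h/4) hc4).analyticAt _).comp hG
    simpa [Function.comp_def] using this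
  refine hcomp.congr ?_
  have hV : IsOpen {q : ℂ × ℂ × ℂ | (h/4 + (q.2.2 - h)).re < 0} := by
    apply isOpen_lt ?_ continuous_const
    exact Complex.continuous_re.comp (continuous_const.add
      ((continuous_snd.comp continuous_snd).sub continuous_const))
  have hpV : p ∈ {q : ℂ × ℂ × ℂ | (h/4 + (q.2.2 - h)).re < 0} := by
    simp only [mem_setOf_eq, ← hhdef, sub_self, add_zero]
    exact hc4
  filter_upwards [hV.mem_nhds hpV] with q hq
  exact (pearcey_rep h hh q.1 q.2.1 q.2.2 hq).symm

/-- For `Re η < 0` the Pearcey integral converges absolutely, is analytic in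
`(x₁,x₂,η)`, and satisfies `P₁u = P₂u = P₃u = 0`. -/
theorem pearcey_integral_properties :
    (∀ x₁ x₂ η : ℂ, η.re < 0 →
      Integrable (fun z : ℝ =>
        Complex.exp (η * ((z : ℂ) ^ 4 + x₂ * (z : ℂ) ^ 2 + x₁ * (z : ℂ))))) ∧
    AnalyticOnNhd ℂ (fun p : ℂ × ℂ × ℂ => pearcey p.1 p.2.1 p.2.2)
      {p : ℂ × ℂ × ℂ | p.2.2.re < 0} ∧
    (∀ x₁ x₂ η : ℂ, η.re < 0 →
      P1 pearcey x₁ x₂ η = 0 ∧ P2 pearcey x₁ x₂ η = 0 ∧ P3 pearcey x₁ x₂ η = 0) := by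
  refine ⟨?_, pearcey_analyticOnNhd, ?_⟩
  · intro x₁ x₂ η hη
    have := integrable_pow_Eker 0 x₁ x₂ η hη
    refine this.congr (ae_of_all _ fun z => ?_)
    simp [Eker]
  · intro x₁ x₂ η hη
    exact pearcey_PDEs x₁ x₂ η hη
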